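/- arXiv:0805.3853 — 4 statements merged into one kernel-verified Lean document; each statement's English description precedes it below -/
import Mathlib

section
/- Let α < 1 be real and let V : ℕ × ℕ → ℝ satisfy the backward recursion V(n,k) = (n − αk)·V(n+1,k) + V(n+1,k+1) for all integers 1 ≤ k ≤ n. Then the Gibbs EPPF p of type α with weights V satisfies the consistency (addition) rule: for every k-tuple (n_1,…,n_k) of positive integers with sum n, p(n_1,…,n_k) = ∑_{j=1}^{k} p(n_1,…,n_j + 1,…,n_k) + p(n_1,…,n_k,1). -/
/-- Rising factorial `(x)_{n↑} = ∏_{i=0}^{n-1} (x + i)`. -/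
noncomputable def risefac (x : ℝ) (n : ℕ) : ℝ := ∏ i ∈ Finset.range n, (x + i)

/-- If the weights `V` satisfy the backward recursion
`V(n,k) = (n − αk)·V(n+1,k) + V(n+1,k+1)` for `1 ≤ k ≤ n`, then the Gibbs EPPF of type `α`,
`p(n_1,…,n_k) = V(n,k) ∏_j (1-α)_{n_j-1↑}`, satisfies the consistency (addition) rule
`p(n_1,…,n_k) = ∑_{j=1}^k p(n_1,…,n_j+1,…,n_k) + p(n_1,…,n_k,1)`. -/
theorem gibbs_eppf_consistency (α : ℝ) (hα : α < 1) (V : ℕ → ℕ → ℝ)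
    (hV : ∀ n k : ℕ, 1 ≤ k → k ≤ n →
      V n k = ((n : ℝ) - α * k) * V (n + 1) k + V (n + 1) (k + 1))
    (k : ℕ) (hk : 1 ≤ k) (nvec : Fin k → ℕ) (hpos : ∀ j, 0 < nvec j)
    (n : ℕ) (hsum : ∑ j, nvec j = n) :
    V n k * ∏ j, risefac (1 - α) (nvec j - 1)
      = (∑ j, V (n + 1) k *
            ∏ i, risefac (1 - α) ((if i = j then nvec i + 1 else nvec i) - 1))
        + V (n + 1) (k + 1) *
            ((∏ j, risefac (1 - α) (nvec j - 1)) * risefac (1 - α) (1 - 1)) := by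
  have hkn : k ≤ n := by
    calc k = ∑ _j : Fin k, 1 := by simp
    _ ≤ ∑ j, nvec j := Finset.sum_le_sum fun j _ => hpos j
    _ = n := hsum
  have key : ∀ j : Fin k, ∏ i, risefac (1 - α) ((if i = j then nvec i + 1 else nvec i) - 1)
      = ((nvec j : ℝ) - α) * ∏ i, risefac (1 - α) (nvec i - 1) := by
    intro j
    have h1 : risefac (1 - α) (nvec j + 1 - 1)
        = ((nvec j : ℝ) - α) * risefac (1 - α) (nvec j - 1) := by
      have hj := hpos j
      have he : nvec j + 1 - 1 = (nvec j - 1) + 1 := by omega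
      rw [he, risefac, Finset.prod_range_succ, ← risefac]
      have : (1 - α + ((nvec j - 1 : ℕ) : ℝ)) = (nvec j : ℝ) - α := by
        rw [Nat.cast_sub (by omega : 1 ≤ nvec j)]; push_cast; ring
      rw [this]; ring
    rw [← Finset.mul_prod_erase Finset.univ _ (Finset.mem_univ j),
        ← Finset.mul_prod_erase Finset.univ (fun i => risefac (1 - α) (nvec i - 1))
          (Finset.mem_univ j)]
    have hprod : ∏ i ∈ Finset.univ.erase j,
        risefac (1 - α) ((if i = j then nvec i + 1 else nvec i) - 1)
        = ∏ i ∈ Finset.univ.erase j, risefac (1 - α) (nvec i - 1) :=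
      Finset.prod_congr rfl fun i hi => by
        rw [if_neg (Finset.ne_of_mem_erase hi)]
    rw [if_pos rfl, h1, hprod]
    ring
  have hsum2 : ∑ j, (((nvec j : ℝ)) - α) = (n : ℝ) - α * k := by
    rw [Finset.sum_sub_distrib]
    simp [← Nat.cast_sum, hsum, mul_comm]
  rw [hV n k hk hkn]
  simp only [key, ← mul_assoc]
  rw [← Finset.sum_mul, ← Finset.mul_sum, hsum2]
  have h0 : risefac (1 - α) (1 - 1) = 1 := by simp [risefac]
  rw [h0]
  ring
end

section
/- Let α < 1 be real, let V : ℕ × ℕ → ℝ be weights, let (n_1,…,n_k) be positive integers with sum n and V(n,k) ≠ 0, and let m ≥ 1. For the Gibbs EPPF p of type α with weights V, summing over all partitions {B_1,…,B_{k*}} of the set {1,…,m} into nonempty blocks (k* ranging over the number of blocks): ∑_{partitions of {1,…,m}} p(n_1,…,n_k, |B_1|,…,|B_{k*}|) / p(n_1,…,n_k) = ∑_{k*=1}^{m} (V(n+m, k+k*)/V(n,k)) · S_{m,k*}^{-1,-α}. -/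
/-- Generalized Stirling number `S_{n,k}^{-1,-α} = (n!/k!) ∑ ∏_j (1-α)_{n_j-1↑}/n_j!`,
the sum over positive tuples `(n_1,…,n_k)` with sum `n`. -/
noncomputable def genStirling (α : ℝ) (n k : ℕ) : ℝ :=
  ((n.factorial : ℝ) / k.factorial) *
    ∑ f ∈ (Finset.Nat.antidiagonalTuple k n).filter (fun f => ∀ i, 0 < f i),
      ∏ j, risefac (1 - α) (f j - 1) / (f j).factorial

/-- `P` is a partition of `{1,…,n}` (modeled as `Fin n`) into nonempty blocks. -/
def isSetPartition {n : ℕ} (P : Finset (Finset (Fin n))) : Prop :=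
  ∅ ∉ P ∧ (∀ A ∈ P, ∀ B ∈ P, A ≠ B → Disjoint A B) ∧ P.sup id = Finset.univ

instance {n : ℕ} (P : Finset (Finset (Fin n))) : Decidable (isSetPartition P) := by
  unfold isSetPartition; infer_instance

/-- All partitions of `{1,…,n}` into nonempty blocks. -/
def allPartitions (n : ℕ) : Finset (Finset (Finset (Fin n))) :=
  Finset.univ.filter (fun P => isSetPartition P)

open Finset

namespace GibbsAux

/-- fiber of `σ` over `j` -/
def fib {m k : ℕ} (σ : Fin m → Fin k) (j : Fin k) : Finset (Fin m) :=
  Finset.univ.filter (fun i => σ i = j)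

lemma mem_fib {m k : ℕ} (σ : Fin m → Fin k) (j : Fin k) (i : Fin m) :
    i ∈ fib σ j ↔ σ i = j := by simp [fib]

lemma fib_disjoint {m k : ℕ} (σ : Fin m → Fin k) {j j' : Fin k} (h : j ≠ j') :
    Disjoint (fib σ j) (fib σ j') := by
  rw [Finset.disjoint_left]
  intro i hi hi'
  rw [mem_fib] at hi hi'
  exact h (hi ▸ hi'.symm ▸ rfl)

lemma fib_card_snoc {m k : ℕ} (σ' : Fin m → Fin k) (j₀ j : Fin k) :
    (fib (Fin.snoc σ' j₀) j).card = (fib σ' j).card + if j = j₀ then 1 else 0 := by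
  have himage : (fib σ' j).image Fin.castSucc =
      (fib (Fin.snoc σ' j₀) j).erase (Fin.last m) := by
    ext i
    simp only [Finset.mem_image, Finset.mem_erase, mem_fib]
    constructor
    · rintro ⟨i', hi', rfl⟩
      exact ⟨(Fin.castSucc_lt_last i').ne, by simp [hi']⟩
    · rintro ⟨hne, hval⟩
      rcases Fin.exists_castSucc_eq.mpr hne with ⟨i', rfl⟩
      exact ⟨i', by simpa using hval, rfl⟩
  have hcard : (fib σ' j).card = ((fib (Fin.snoc σ' j₀) j).erase (Fin.last m)).card := by
    rw [← himage, Finset.card_image_of_injective _ (Fin.castSucc_injective m)]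
  by_cases hj : j = j₀
  · subst hj
    have hmem : Fin.last m ∈ fib (Fin.snoc σ' j) j := by
      rw [mem_fib]; simp
    rw [hcard, Finset.card_erase_of_mem hmem]
    have : 0 < (fib (Fin.snoc σ' j) j).card := Finset.card_pos.mpr ⟨_, hmem⟩
    simp; omega
  · have hmem : Fin.last m ∉ fib (Fin.snoc σ' j₀) j := by
      rw [mem_fib]; simp [Fin.snoc_last]; exact fun h => hj h.symm
    rw [hcard, Finset.erase_eq_of_notMem hmem]
    simp [hj]

lemma sum_card_fib {m k : ℕ} (σ : Fin m → Fin k) : ∑ j, (fib σ j).card = m := by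
  have := Finset.card_eq_sum_card_fiberwise
    (f := σ) (s := Finset.univ) (t := Finset.univ) (fun x _ => Finset.mem_univ _)
  simpa [fib] using this.symm

/-- counting lemma: number of functions with prescribed fiber sizes -/
lemma count_fib (m : ℕ) : ∀ {k : ℕ} (f : Fin k → ℕ), (∑ j, f j) = m →
    ((Finset.univ.filter
        (fun σ : Fin m → Fin k => ∀ j, (fib σ j).card = f j)).card)
      * ∏ j, (f j).factorial = m.factorial := by
  induction m with
  | zero =>
    intro k f hf
    have hf0 : ∀ j, f j = 0 := fun j =>
      (Finset.sum_eq_zero_iff.mp hf) j (Finset.mem_univ j)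
    have : (Finset.univ.filter
        (fun σ : Fin 0 → Fin k => ∀ j, (fib σ j).card = f j)) = Finset.univ := by
      apply Finset.filter_true_of_mem
      intro σ _ j
      rw [hf0 j]
      simp [fib]
    rw [this]
    simp [hf0, Finset.card_univ]
  | succ m ih =>
    intro k f hf
    have hper : ∀ j₀ : Fin k,
        ((Finset.univ.filter
            (fun σ : Fin (m+1) → Fin k => ∀ j, (fib σ j).card = f j)).filter
              (fun σ => σ (Fin.last m) = j₀)).card * ∏ j, (f j).factorial
          = m.factorial * f j₀ := by
      intro j₀
      by_cases h0 : f j₀ = 0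
      · have he : ((Finset.univ.filter
            (fun σ : Fin (m+1) → Fin k => ∀ j, (fib σ j).card = f j)).filter
              (fun σ => σ (Fin.last m) = j₀)) = ∅ := by
          rw [Finset.filter_eq_empty_iff]
          intro σ hσ hlast
          rw [Finset.mem_filter] at hσ
          have h1 := hσ.2 j₀
          have h2 : Fin.last m ∈ fib σ j₀ := by rw [mem_fib]; exact hlast
          have := Finset.card_pos.mpr ⟨_, h2⟩
          omega
        rw [he]; simp [h0]
      · obtain ⟨t, ht⟩ : ∃ t, f j₀ = t + 1 := ⟨f j₀ - 1, by omega⟩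
        have hsplit : ∑ j, f j = (∑ j ∈ Finset.univ \ {j₀}, f j) + f j₀ :=
          Finset.sum_eq_sum_sdiff_singleton_add (Finset.mem_univ j₀) f
        have hupd : ∑ j, Function.update f j₀ t j = t + ∑ j ∈ Finset.univ \ {j₀}, f j :=
          Finset.sum_update_of_mem (Finset.mem_univ j₀) f t
        have hsum' : ∑ j, Function.update f j₀ t j = m := by omega
        have hbij : ((Finset.univ.filter
            (fun σ : Fin (m+1) → Fin k => ∀ j, (fib σ j).card = f j)).filter
              (fun σ => σ (Fin.last m) = j₀)).card =
            (Finset.univ.filter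
              (fun σ' : Fin m → Fin k =>
                ∀ j, (fib σ' j).card = Function.update f j₀ t j)).card := by
          refine Finset.card_bij' (fun σ _ => Fin.init σ) (fun σ' _ => Fin.snoc σ' j₀)
            ?_ ?_ ?_ ?_
          · intro σ hσ
            simp only [Finset.mem_filter, Finset.mem_univ, true_and] at hσ ⊢
            obtain ⟨hσ2, hσ3⟩ := hσ
            intro j
            have h2 : Fin.snoc (Fin.init σ) j₀ = σ := by
              rw [← hσ3]; exact Fin.snoc_init_self σ
            have h1 := hσ2 j
            rw [← h2, fib_card_snoc] at h1
            by_cases hj : j = j₀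
            · subst hj
              rw [Function.update_self]
              simp at h1
              omega
            · rw [Function.update_of_ne hj]
              simp [hj] at h1
              omega
          · intro σ' hσ'
            simp only [Finset.mem_filter, Finset.mem_univ, true_and] at hσ' ⊢
            refine ⟨fun j => ?_, by simp⟩
            rw [fib_card_snoc]
            have h1 := hσ' j
            by_cases hj : j = j₀
            · subst hj
              rw [Function.update_self] at h1
              simp
              omega
            · rw [Function.update_of_ne hj] at h1
              simp [hj]
              omega
          · intro σ hσ
            simp only [Finset.mem_filter] at hσ
            have h2 : Fin.snoc (Fin.init σ) j₀ = σ := by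
              rw [← hσ.2]; exact Fin.snoc_init_self σ
            exact h2
          · intro σ' _
            simp
        rw [hbij]
        have hprod : ∏ j, (f j).factorial =
            (t + 1) * ∏ j, (Function.update f j₀ t j).factorial := by
          have h1 : ∀ j, (Function.update f j₀ t j).factorial =
              Function.update (fun j => (f j).factorial) j₀ t.factorial j := fun j =>
            Function.apply_update (fun _ n => n.factorial) f j₀ t j
          rw [Finset.prod_congr rfl (fun j _ => h1 j),
            Finset.prod_update_of_mem (Finset.mem_univ j₀),
            Finset.prod_eq_prod_diff_singleton_mul (Finset.mem_univ j₀)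
              (fun j => (f j).factorial), ht, Nat.factorial_succ]
          ring
        rw [hprod, ← mul_assoc, mul_comm _ (t+1), mul_assoc,
          ih (Function.update f j₀ t) hsum', ht]
        ring
    have hcard : (Finset.univ.filter
        (fun σ : Fin (m+1) → Fin k => ∀ j, (fib σ j).card = f j)).card
        = ∑ j₀ : Fin k, ((Finset.univ.filter
            (fun σ : Fin (m+1) → Fin k => ∀ j, (fib σ j).card = f j)).filter
              (fun σ => σ (Fin.last m) = j₀)).card :=
      Finset.card_eq_sum_card_fiberwise (fun x _ => Finset.mem_univ _)
    rw [hcard, Finset.sum_mul,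
      Finset.sum_congr rfl (fun j₀ _ => hper j₀),
      ← Finset.mul_sum, hf, Nat.factorial_succ]
    ring

section Partitions

variable {m : ℕ}

lemma existsUnique_block {P : Finset (Finset (Fin m))} (hP : isSetPartition P) (i : Fin m) :
    ∃! A, A ∈ P ∧ i ∈ A := by
  obtain ⟨h1, h2, h3⟩ := hP
  have : i ∈ P.sup id := h3 ▸ Finset.mem_univ i
  rw [Finset.mem_sup] at this
  obtain ⟨A, hA, hiA⟩ := this
  refine ⟨A, ⟨hA, hiA⟩, ?_⟩
  rintro B ⟨hB, hiB⟩
  by_contra hne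
  exact Finset.disjoint_left.mp (h2 B hB A hA hne) hiB hiA

/-- the block of a partition containing `i` -/
def blockOf {P : Finset (Finset (Fin m))} (hP : isSetPartition P) (i : Fin m) :
    Finset (Fin m) :=
  Finset.choose (fun A => i ∈ A) P (existsUnique_block hP i)

lemma blockOf_mem {P : Finset (Finset (Fin m))} (hP : isSetPartition P) (i : Fin m) :
    blockOf hP i ∈ P := Finset.choose_mem _ _ _

lemma mem_blockOf {P : Finset (Finset (Fin m))} (hP : isSetPartition P) (i : Fin m) :
    i ∈ blockOf hP i := Finset.choose_property (fun A => i ∈ A) P (existsUnique_block hP i)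

lemma blockOf_eq_iff {P : Finset (Finset (Fin m))} (hP : isSetPartition P) (i : Fin m)
    {A : Finset (Fin m)} (hA : A ∈ P) : blockOf hP i = A ↔ i ∈ A := by
  constructor
  · rintro rfl; exact mem_blockOf hP i
  · intro hiA
    exact ((existsUnique_block hP i).unique ⟨blockOf_mem hP i, mem_blockOf hP i⟩ ⟨hA, hiA⟩)

end Partitions

section LemA

variable {m k : ℕ}

/-- image of fibers -/
def fibPart (σ : Fin m → Fin k) : Finset (Finset (Fin m)) :=
  Finset.univ.image (fib σ)

lemma fib_nonempty_of_surj {σ : Fin m → Fin k} (hσ : Function.Surjective σ) (j : Fin k) :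
    (fib σ j).Nonempty := by
  obtain ⟨i, hi⟩ := hσ j
  exact ⟨i, (mem_fib σ j i).mpr hi⟩

lemma fib_injective_of_surj {σ : Fin m → Fin k} (hσ : Function.Surjective σ) :
    Function.Injective (fib σ) := by
  intro j j' h
  by_contra hne
  obtain ⟨i, hi⟩ := fib_nonempty_of_surj hσ j
  have hi' : i ∈ fib σ j' := h ▸ hi
  exact hne ((mem_fib σ j i).mp hi ▸ ((mem_fib σ j' i).mp hi').symm ▸ rfl)

lemma fibPart_isPartition {σ : Fin m → Fin k} (hσ : Function.Surjective σ) :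
    isSetPartition (fibPart σ) := by
  refine ⟨?_, ?_, ?_⟩
  · intro h
    rw [fibPart, Finset.mem_image] at h
    obtain ⟨j, _, hj⟩ := h
    obtain ⟨i, hi⟩ := fib_nonempty_of_surj hσ j
    rw [hj] at hi
    exact absurd hi (Finset.notMem_empty i)
  · intro A hA B hB hne
    rw [fibPart, Finset.mem_image] at hA hB
    obtain ⟨j, _, rfl⟩ := hA
    obtain ⟨j', _, rfl⟩ := hB
    exact fib_disjoint σ (fun h => hne (h ▸ rfl))
  · apply Finset.eq_univ_of_forall
    intro i
    rw [Finset.mem_sup]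
    exact ⟨fib σ (σ i), Finset.mem_image_of_mem _ (Finset.mem_univ _),
      (mem_fib σ (σ i) i).mpr rfl⟩

lemma fibPart_card {σ : Fin m → Fin k} (hσ : Function.Surjective σ) :
    (fibPart σ).card = k := by
  rw [fibPart, Finset.card_image_of_injective _ (fib_injective_of_surj hσ),
    Finset.card_univ, Fintype.card_fin]

lemma card_fiber_eq_factorial {P : Finset (Finset (Fin m))} (hP : isSetPartition P)
    (hPk : P.card = k) :
    ((Finset.univ.filter (fun σ : Fin m → Fin k => Function.Surjective σ)).filter
      (fun σ => fibPart σ = P)).card = k.factorial := by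
  have hcoe : Fintype.card {A // A ∈ P} = k := by
    rw [Fintype.card_coe]; exact hPk
  have hcard : Fintype.card (Fin k ≃ {A // A ∈ P}) = k.factorial := by
    have e : Fin k ≃ {A // A ∈ P} := Fintype.equivOfCardEq (by simp [hcoe])
    rw [Fintype.card_equiv e, Fintype.card_fin]
  rw [← hcard, ← Finset.card_univ]
  -- bijection between sigma-set and equivs
  have key : ∀ (σ : Fin m → Fin k), Function.Surjective σ → fibPart σ = P →
      ∀ j, fib σ j ∈ P := by
    intro σ hσ hfp j
    rw [← hfp, fibPart]
    exact Finset.mem_image_of_mem _ (Finset.mem_univ _)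
  refine Finset.card_bij'
    (fun σ hσ => ?_) (fun e _ => fun i => e.symm ⟨blockOf hP i, blockOf_mem hP i⟩)
    ?_ ?_ ?_ ?_
  · -- forward map
    simp only [Finset.mem_filter, Finset.mem_univ, true_and] at hσ
    exact Equiv.ofBijective (fun j => ⟨fib σ j, key σ hσ.1 hσ.2 j⟩)
      ((Fintype.bijective_iff_injective_and_card _).mpr
        ⟨fun j j' h => fib_injective_of_surj hσ.1 (congrArg Subtype.val h),
          by simp [hcoe]⟩)
  · intro σ hσ; exact Finset.mem_univ _
  · -- backward lands in the filtered set
    intro e _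
    simp only [Finset.mem_filter, Finset.mem_univ, true_and]
    have hfib : ∀ j, fib (fun i => e.symm ⟨blockOf hP i, blockOf_mem hP i⟩) j
        = (e j : Finset (Fin m)) := by
      intro j
      ext i
      rw [mem_fib]
      rw [Equiv.symm_apply_eq]
      constructor
      · intro h
        have h2 : blockOf hP i = (e j : Finset (Fin m)) := Subtype.ext_iff.mp h
        rw [← h2]
        exact mem_blockOf hP i
      · intro h
        exact Subtype.ext ((blockOf_eq_iff hP i (e j).2).mpr h)
    constructor
    · intro j
      have hne : ((e j : Finset (Fin m))).Nonempty := by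
        rcases Finset.eq_empty_or_nonempty (e j : Finset (Fin m)) with h | h
        · exact absurd (h ▸ (e j).2) hP.1
        · exact h
      obtain ⟨i, hi⟩ := hne
      refine ⟨i, ?_⟩
      have h2 : i ∈ fib (fun i => e.symm ⟨blockOf hP i, blockOf_mem hP i⟩) j := by
        rw [hfib j]; exact hi
      exact (mem_fib _ j i).mp h2
    · rw [fibPart]
      apply Finset.Subset.antisymm
      · intro A hA
        rw [Finset.mem_image] at hA
        obtain ⟨j, _, rfl⟩ := hA
        rw [hfib j]
        exact (e j).2
      · intro A hA
        rw [Finset.mem_image]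
        refine ⟨e.symm ⟨A, hA⟩, Finset.mem_univ _, ?_⟩
        rw [hfib, Equiv.apply_symm_apply]
  · -- left inverse
    intro σ hσ
    simp only [Finset.mem_filter, Finset.mem_univ, true_and] at hσ
    funext i
    rw [Equiv.symm_apply_eq, Equiv.ofBijective_apply]
    apply Subtype.ext
    simp only
    rw [blockOf_eq_iff hP i (key σ hσ.1 hσ.2 (σ i))]
    exact (mem_fib σ (σ i) i).mpr rfl
  · -- right inverse
    intro e he
    apply Equiv.ext
    intro j
    rw [Equiv.ofBijective_apply]
    apply Subtype.ext
    simp only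
    ext i
    rw [mem_fib, Equiv.symm_apply_eq]
    constructor
    · intro h
      have h2 : blockOf hP i = (e j : Finset (Fin m)) := Subtype.ext_iff.mp h
      rw [← h2]
      exact mem_blockOf hP i
    · intro h
      exact Subtype.ext ((blockOf_eq_iff hP i (e j).2).mpr h)

end LemA

section Sums

variable {m k : ℕ}

lemma sum_surj (g : ℕ → ℝ) (m k : ℕ) :
    ∑ σ ∈ Finset.univ.filter (fun σ : Fin m → Fin k => Function.Surjective σ),
        ∏ j, g ((fib σ j).card)
      = (k.factorial : ℝ) *
        ∑ P ∈ (allPartitions m).filter (fun P => P.card = k), ∏ A ∈ P, g A.card := by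
  have hmaps : ∀ σ ∈ Finset.univ.filter
      (fun σ : Fin m → Fin k => Function.Surjective σ),
      fibPart σ ∈ (allPartitions m).filter (fun P => P.card = k) := by
    intro σ hσ
    rw [Finset.mem_filter] at hσ
    rw [Finset.mem_filter, allPartitions, Finset.mem_filter]
    exact ⟨⟨Finset.mem_univ _, fibPart_isPartition hσ.2⟩, fibPart_card hσ.2⟩
  rw [← Finset.sum_fiberwise_of_maps_to hmaps, Finset.mul_sum]
  apply Finset.sum_congr rfl
  intro P hP
  rw [Finset.mem_filter, allPartitions, Finset.mem_filter] at hP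
  obtain ⟨⟨-, hPpart⟩, hPk⟩ := hP
  have hconst : ∀ σ ∈ (Finset.univ.filter
      (fun σ : Fin m → Fin k => Function.Surjective σ)).filter
        (fun σ => fibPart σ = P),
      ∏ j, g ((fib σ j).card) = ∏ A ∈ P, g A.card := by
    intro σ hσ
    rw [Finset.mem_filter, Finset.mem_filter] at hσ
    obtain ⟨⟨-, hsurj⟩, hfp⟩ := hσ
    rw [← hfp, fibPart, Finset.prod_image
      (fun j _ j' _ h => fib_injective_of_surj hsurj h)]
  rw [Finset.sum_congr rfl hconst, Finset.sum_const, nsmul_eq_mul,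
    card_fiber_eq_factorial hPpart hPk]

lemma sum_surj_tuple (g : ℕ → ℝ) (m k : ℕ) :
    ∑ σ ∈ Finset.univ.filter (fun σ : Fin m → Fin k => Function.Surjective σ),
        ∏ j, g ((fib σ j).card)
      = ∑ f ∈ (Finset.Nat.antidiagonalTuple k m).filter (fun f => ∀ i, 0 < f i),
          (m.factorial : ℝ) * (∏ j, g (f j)) / ∏ j, ((f j).factorial : ℝ) := by
  have hmaps : ∀ σ ∈ Finset.univ.filter
      (fun σ : Fin m → Fin k => Function.Surjective σ),
      (fun j => (fib σ j).card) ∈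
        (Finset.Nat.antidiagonalTuple k m).filter (fun f => ∀ i, 0 < f i) := by
    intro σ hσ
    rw [Finset.mem_filter] at hσ
    rw [Finset.mem_filter, Finset.Nat.mem_antidiagonalTuple]
    exact ⟨sum_card_fib σ,
      fun j => Finset.card_pos.mpr (fib_nonempty_of_surj hσ.2 j)⟩
  rw [← Finset.sum_fiberwise_of_maps_to hmaps]
  apply Finset.sum_congr rfl
  intro f hf
  rw [Finset.mem_filter, Finset.Nat.mem_antidiagonalTuple] at hf
  have hset : (Finset.univ.filter
      (fun σ : Fin m → Fin k => Function.Surjective σ)).filter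
        (fun σ => (fun j => (fib σ j).card) = f)
      = Finset.univ.filter
        (fun σ : Fin m → Fin k => ∀ j, (fib σ j).card = f j) := by
    ext σ
    simp only [Finset.mem_filter, Finset.mem_univ, true_and]
    constructor
    · rintro ⟨-, hvec⟩ j
      exact congrFun hvec j
    · intro h
      refine ⟨?_, funext h⟩
      intro j
      have : 0 < (fib σ j).card := h j ▸ hf.2 j
      obtain ⟨i, hi⟩ := Finset.card_pos.mp this
      exact ⟨i, (mem_fib σ j i).mp hi⟩
  rw [hset]
  have hconst : ∀ σ ∈ Finset.univ.filter
      (fun σ : Fin m → Fin k => ∀ j, (fib σ j).card = f j),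
      ∏ j, g ((fib σ j).card) = ∏ j, g (f j) := by
    intro σ hσ
    rw [Finset.mem_filter] at hσ
    exact Finset.prod_congr rfl (fun j _ => by rw [hσ.2 j])
  rw [Finset.sum_congr rfl hconst, Finset.sum_const, nsmul_eq_mul]
  have hcount := count_fib m f hf.1
  have hcast : ((Finset.univ.filter
      (fun σ : Fin m → Fin k => ∀ j, (fib σ j).card = f j)).card : ℝ)
      * ∏ j, ((f j).factorial : ℝ) = (m.factorial : ℝ) := by
    exact_mod_cast congrArg (Nat.cast : ℕ → ℝ) hcount
  have hne : (∏ j, ((f j).factorial : ℝ)) ≠ 0 := by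
    apply Finset.prod_ne_zero_iff.mpr
    intro j _
    exact_mod_cast (f j).factorial_ne_zero
  rw [eq_div_iff hne]
  linear_combination (∏ j, g (f j)) * hcast

/-- key combinatorial identity -/
lemma key_identity (g : ℕ → ℝ) (m k : ℕ) :
    (k.factorial : ℝ) *
      ∑ P ∈ (allPartitions m).filter (fun P => P.card = k), ∏ A ∈ P, g A.card
    = ∑ f ∈ (Finset.Nat.antidiagonalTuple k m).filter (fun f => ∀ i, 0 < f i),
        (m.factorial : ℝ) * (∏ j, g (f j)) / ∏ j, ((f j).factorial : ℝ) := by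
  rw [← sum_surj, sum_surj_tuple]

end Sums

lemma risefac_pos {x : ℝ} (hx : 0 < x) (n : ℕ) : 0 < risefac x n := by
  apply Finset.prod_pos
  intro i _
  positivity

lemma partSum_eq (α : ℝ) (m k : ℕ) :
    ∑ P ∈ (allPartitions m).filter (fun P => P.card = k),
        ∏ A ∈ P, risefac (1 - α) (A.card - 1)
      = genStirling α m k := by
  have h := key_identity (fun t => risefac (1 - α) (t - 1)) m k
  have hrhs : ∑ f ∈ (Finset.Nat.antidiagonalTuple k m).filter (fun f => ∀ i, 0 < f i),
      (m.factorial : ℝ) * (∏ j, risefac (1 - α) (f j - 1)) / ∏ j, ((f j).factorial : ℝ)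
      = (m.factorial : ℝ) *
        ∑ f ∈ (Finset.Nat.antidiagonalTuple k m).filter (fun f => ∀ i, 0 < f i),
          ∏ j, risefac (1 - α) (f j - 1) / ((f j).factorial : ℝ) := by
    rw [Finset.mul_sum]
    apply Finset.sum_congr rfl
    intro f _
    rw [Finset.prod_div_distrib]
    ring
  rw [hrhs] at h
  have hk : (k.factorial : ℝ) ≠ 0 := by exact_mod_cast k.factorial_ne_zero
  rw [genStirling, div_mul_eq_mul_div, eq_div_iff hk]
  linear_combination h

lemma sum_card_blocks {m : ℕ} {P : Finset (Finset (Fin m))} (hP : isSetPartition P) :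
    ∑ A ∈ P, A.card = m := by
  have h3 := hP.2.2
  rw [Finset.sup_eq_biUnion] at h3
  have hd := Finset.card_biUnion (fun A hA B hB hne => hP.2.1 A hA B hB hne) (t := id)
  rw [h3] at hd
  simpa using hd.symm

lemma partition_card_mem_Icc {m : ℕ} {P : Finset (Finset (Fin m))}
    (hP : isSetPartition P) (hm : 1 ≤ m) : P.card ∈ Finset.Icc 1 m := by
  rw [Finset.mem_Icc]
  constructor
  · rw [Nat.one_le_iff_ne_zero, ← Nat.pos_iff_ne_zero, Finset.card_pos]
    by_contra hne
    rw [Finset.not_nonempty_iff_eq_empty] at hne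
    have h3 := hP.2.2
    rw [hne] at h3
    simp only [Finset.sup_empty] at h3
    have hne' : (Finset.univ : Finset (Fin m)).Nonempty := ⟨⟨0, hm⟩, Finset.mem_univ _⟩
    rw [← h3] at hne'
    simp at hne' 
  · calc P.card = ∑ A ∈ P, 1 := by rw [Finset.card_eq_sum_ones]
      _ ≤ ∑ A ∈ P, A.card := by
          apply Finset.sum_le_sum
          intro A hA
          rw [Nat.one_le_iff_ne_zero, ← Nat.pos_iff_ne_zero, Finset.card_pos,
            Finset.nonempty_iff_ne_empty]
          rintro rfl
          exact hP.1 hA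
      _ = m := sum_card_blocks hP

end GibbsAux

/-- Summing the seating ratios of a Gibbs EPPF of type `α` over all partitions
`{B_1,…,B_{k*}}` of the `m` new customers into new tables:
`∑_P p(n_1,…,n_k,|B_1|,…,|B_{k*}|)/p(n_1,…,n_k)
  = ∑_{k*=1}^m (V(n+m,k+k*)/V(n,k)) S_{m,k*}^{-1,-α}`,
where `p(n_1,…,n_k) = V(n,k) ∏_j (1−α)_{n_j−1↑}`. -/
theorem gibbs_all_new_tables (α : ℝ) (hα : α < 1) (V : ℕ → ℕ → ℝ)
    (k : ℕ) (nvec : Fin k → ℕ) (hpos : ∀ j, 0 < nvec j)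
    (n : ℕ) (hsum : ∑ j, nvec j = n) (hVn : V n k ≠ 0) (m : ℕ) (hm : 1 ≤ m) :
    ∑ P ∈ allPartitions m,
        (V (n + m) (k + P.card) * ((∏ j, risefac (1 - α) (nvec j - 1)) *
            ∏ A ∈ P, risefac (1 - α) (A.card - 1))) /
          (V n k * ∏ j, risefac (1 - α) (nvec j - 1))
      = ∑ kstar ∈ Finset.Icc 1 m, (V (n + m) (k + kstar) / V n k) * genStirling α m kstar := by
  have hR : (∏ j, risefac (1 - α) (nvec j - 1)) ≠ 0 := by
    apply ne_of_gt
    apply Finset.prod_pos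
    intro j _
    exact GibbsAux.risefac_pos (by linarith) _
  have hstep : ∀ P ∈ allPartitions m,
      (V (n + m) (k + P.card) * ((∏ j, risefac (1 - α) (nvec j - 1)) *
          ∏ A ∈ P, risefac (1 - α) (A.card - 1))) /
        (V n k * ∏ j, risefac (1 - α) (nvec j - 1))
      = (V (n + m) (k + P.card) / V n k) * ∏ A ∈ P, risefac (1 - α) (A.card - 1) := by
    intro P _
    field_simp
  rw [Finset.sum_congr rfl hstep]
  have hmaps : ∀ P ∈ allPartitions m, P.card ∈ Finset.Icc 1 m := by
    intro P hP
    rw [allPartitions, Finset.mem_filter] at hP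
    exact GibbsAux.partition_card_mem_Icc hP.2 hm
  rw [← Finset.sum_fiberwise_of_maps_to hmaps]
  apply Finset.sum_congr rfl
  intro kstar _
  have hconst : ∀ P ∈ (allPartitions m).filter (fun P => P.card = kstar),
      (V (n + m) (k + P.card) / V n k) * ∏ A ∈ P, risefac (1 - α) (A.card - 1)
      = (V (n + m) (k + kstar) / V n k) * ∏ A ∈ P, risefac (1 - α) (A.card - 1) := by
    intro P hP
    rw [Finset.mem_filter] at hP
    rw [hP.2]
  rw [Finset.sum_congr rfl hconst, ← Finset.mul_sum, GibbsAux.partSum_eq]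
end

section
/- Let α < 1 be real, let V : ℕ × ℕ → ℝ be weights, let (n_1,…,n_k) be positive integers with sum n and V(n,k) ≠ 0, let (s_1,…,s_{k*}) be positive integers with sum s, and let m ≥ s. For the Gibbs EPPF p of type α with weights V: ∑ binom(m, m−s) · ((m−s)!/(m_1!⋯m_k!)) · p(n_1+m_1,…,n_k+m_k, s_1,…,s_{k*}) / p(n_1,…,n_k) = (V(n+m, k+k*)/V(n,k)) · binom(m, m−s) · (n − kα)_{m−s↑} · ∏_{i=1}^{k*} (1−α)_{s_i−1↑}, where the sum ranges over all k-tuples (m_1,…,m_k) of nonnegative integers with m_1 + ⋯ + m_k = m − s. -/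
lemma risefac_zero (x : ℝ) : risefac x 0 = 1 := by simp [risefac]

lemma risefac_succ (x : ℝ) (n : ℕ) : risefac x (n + 1) = risefac x n * (x + n) :=
  Finset.prod_range_succ _ _

lemma risefac_add_nat (x : ℝ) (a b : ℕ) :
    risefac x (a + b) = risefac x a * risefac (x + a) b := by
  induction b with
  | zero => simp [risefac_zero]
  | succ b ih =>
    rw [← add_assoc, risefac_succ, ih, risefac_succ]
    push_cast; ring

lemma risefac_eq_desc (x : ℝ) (n : ℕ) :
    risefac x n = (-1) ^ n * (descPochhammer ℤ n).smeval (-x) := by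
  induction n with
  | zero => simp [risefac_zero]
  | succ n ih =>
    rw [risefac_succ, ih, descPochhammer_succ_right, Polynomial.smeval_mul]
    simp [Polynomial.smeval_sub, Polynomial.smeval_X, Polynomial.smeval_natCast, pow_succ]
    ring

lemma risefac_vandermonde (x y : ℝ) (M : ℕ) :
    risefac (x + y) M = ∑ ij ∈ Finset.HasAntidiagonal.antidiagonal M,
      (M.choose ij.1 : ℝ) * risefac x ij.1 * risefac y ij.2 := by
  have h := Ring.descPochhammer_smeval_add (R := ℝ) (r := -x) (s := -y) M (Commute.all _ _)
  rw [show (-x) + (-y) = -(x+y) by ring] at h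
  rw [risefac_eq_desc, h, Finset.mul_sum]
  refine Finset.sum_congr rfl fun ij hij => ?_
  rw [risefac_eq_desc, risefac_eq_desc]
  have hM : ij.1 + ij.2 = M := Finset.HasAntidiagonal.mem_antidiagonal.mp hij
  rw [← hM, pow_add]
  push_cast
  ring

lemma sum_antidiagonalTuple_succ {k M : ℕ} (F : (Fin (k + 1) → ℕ) → ℝ) :
    ∑ f ∈ Finset.Nat.antidiagonalTuple (k + 1) M, F f
      = ∑ ij ∈ Finset.HasAntidiagonal.antidiagonal M, ∑ g ∈ Finset.Nat.antidiagonalTuple k ij.2,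
          F (Fin.cons ij.1 g) := by
  have hs := Finset.sum_sigma (Finset.HasAntidiagonal.antidiagonal M)
    (fun ij => Finset.Nat.antidiagonalTuple k ij.2) (fun x => F (Fin.cons x.1.1 x.2))
  rw [← hs]
  refine Finset.sum_nbij' (i := fun (f : Fin (k+1) → ℕ) => ⟨(f 0, ∑ j : Fin k, f j.succ), Fin.tail f⟩)
    (j := fun x => Fin.cons x.1.1 x.2) ?_ ?_ ?_ ?_ ?_
  · intro f hf
    have := Finset.Nat.mem_antidiagonalTuple.mp hf
    rw [Fin.sum_univ_succ] at this
    refine Finset.mem_sigma.mpr ⟨Finset.HasAntidiagonal.mem_antidiagonal.mpr this, ?_⟩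
    exact Finset.Nat.mem_antidiagonalTuple.mpr rfl
  · intro x hx
    have hx' := Finset.mem_sigma.mp hx
    have h1 := Finset.HasAntidiagonal.mem_antidiagonal.mp hx'.1
    have h2 := Finset.Nat.mem_antidiagonalTuple.mp hx'.2
    refine Finset.Nat.mem_antidiagonalTuple.mpr ?_
    rw [Fin.sum_univ_succ]
    simpa [h2] using h1
  · intro f hf; simp [Fin.tail]
  · intro x hx
    have hx' := Finset.mem_sigma.mp hx
    have h2 := Finset.Nat.mem_antidiagonalTuple.mp hx'.2
    ext1
    · simp [h2]
    · simp [Fin.tail]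
  · intro f hf
    exact congrArg F (Fin.cons_self_tail f).symm

lemma risefac_multinomial (k : ℕ) (x : Fin k → ℝ) (M : ℕ) :
    ∑ f ∈ Finset.Nat.antidiagonalTuple k M,
        ((M.factorial : ℝ) / ∏ j, ((f j).factorial : ℝ)) * ∏ j, risefac (x j) (f j)
      = risefac (∑ j, x j) M := by
  induction k generalizing M with
  | zero =>
    cases M with
    | zero => simp [risefac_zero]
    | succ M =>
      simp only [Finset.Nat.antidiagonalTuple_zero_succ, Finset.sum_empty]
      rw [Finset.univ_eq_empty, Finset.sum_empty]
      rw [show risefac 0 (M+1) = 0 by simp [risefac, Finset.prod_range_succ']]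
  | succ k ih =>
    rw [sum_antidiagonalTuple_succ, Fin.sum_univ_succ, risefac_vandermonde]
    refine Finset.sum_congr rfl fun ij hij => ?_
    have hM : ij.1 + ij.2 = M := Finset.HasAntidiagonal.mem_antidiagonal.mp hij
    have key : ∀ g ∈ Finset.Nat.antidiagonalTuple k ij.2,
        ((M.factorial : ℝ) / ∏ j, (((Fin.cons ij.1 g : Fin (k+1) → ℕ) j).factorial : ℝ)) *
          ∏ j, risefac (x j) ((Fin.cons ij.1 g : Fin (k+1) → ℕ) j)
        = ((M.choose ij.1 : ℝ) * risefac (x 0) ij.1) *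
          (((ij.2.factorial : ℝ) / ∏ j, ((g j).factorial : ℝ)) *
            ∏ j, risefac (x j.succ) (g j)) := by
      intro g hg
      rw [Fin.prod_univ_succ, Fin.prod_univ_succ]
      simp only [Fin.cons_zero, Fin.cons_succ]
      have hch : (M.factorial : ℝ) = (M.choose ij.1 : ℝ) * ij.1.factorial * ij.2.factorial := by
        rw [← hM, Nat.choose_symm_add]
        exact_mod_cast (Nat.add_choose_mul_factorial_mul_factorial ij.1 ij.2).symm
      have hfac : ((ij.1.factorial : ℝ)) ≠ 0 := Nat.cast_ne_zero.mpr (Nat.factorial_ne_zero _)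
      rw [hch]
      field_simp
    rw [Finset.sum_congr rfl key, ← Finset.mul_sum, ih]

/-- Marginalizing the Gibbs seating probabilities over the allocation of the `m−s`
customers seated at old tables:
`∑ binom(m,m−s) ((m−s)!/(m_1!⋯m_k!)) p(n_1+m_1,…,n_k+m_k,s_1,…,s_{k*})/p(n_1,…,n_k)
  = (V(n+m,k+k*)/V(n,k)) binom(m,m−s) (n−kα)_{m−s↑} ∏_i (1−α)_{s_i−1↑}`,
the sum over nonnegative tuples `(m_1,…,m_k)` with sum `m−s`, where
`p(n_1,…,n_k) = V(n,k) ∏_j (1−α)_{n_j−1↑}`. -/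
theorem gibbs_marginal_old_allocation (α : ℝ) (hα : α < 1) (V : ℕ → ℕ → ℝ)
    (k : ℕ) (nvec : Fin k → ℕ) (hpos : ∀ j, 0 < nvec j)
    (n : ℕ) (hsum : ∑ j, nvec j = n) (hVn : V n k ≠ 0)
    (kstar : ℕ) (svec : Fin kstar → ℕ) (hsv : ∀ i, 0 < svec i)
    (s : ℕ) (hssum : ∑ i, svec i = s) (m : ℕ) (hsm : s ≤ m) :
    ∑ f ∈ Finset.Nat.antidiagonalTuple k (m - s),
        (m.choose (m - s) : ℝ) *
          (((m - s).factorial : ℝ) / ∏ j, ((f j).factorial : ℝ)) *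
          ((V (n + m) (k + kstar) * ((∏ j, risefac (1 - α) (nvec j + f j - 1)) *
              ∏ i, risefac (1 - α) (svec i - 1))) /
            (V n k * ∏ j, risefac (1 - α) (nvec j - 1)))
      = (V (n + m) (k + kstar) / V n k) * (m.choose (m - s) : ℝ) *
          risefac ((n : ℝ) - k * α) (m - s) * ∏ i, risefac (1 - α) (svec i - 1) := by
  have h1α : (0:ℝ) < 1 - α := by linarith
  have hrpos : ∀ t : ℕ, 0 < risefac (1 - α) t := by
    intro t
    exact Finset.prod_pos fun i _ => by positivity
  have hBpos : 0 < ∏ j, risefac (1 - α) (nvec j - 1) :=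
    Finset.prod_pos fun j _ => hrpos _
  have hxj : ∀ j, ((nvec j : ℝ) - α) = (1 - α) + ((nvec j - 1 : ℕ) : ℝ) := by
    intro j
    have h := hpos j
    rw [Nat.cast_sub h]
    push_cast
    ring
  have hsplit : ∀ (f : Fin k → ℕ) (j : Fin k), risefac (1 - α) (nvec j + f j - 1)
      = risefac (1 - α) (nvec j - 1) * risefac ((nvec j : ℝ) - α) (f j) := by
    intro f j
    have h1 : nvec j + f j - 1 = (nvec j - 1) + f j := by have := hpos j; omega
    rw [h1, risefac_add_nat, hxj j]
  have key : ∀ f ∈ Finset.Nat.antidiagonalTuple k (m - s),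
      (m.choose (m - s) : ℝ) *
          (((m - s).factorial : ℝ) / ∏ j, ((f j).factorial : ℝ)) *
          ((V (n + m) (k + kstar) * ((∏ j, risefac (1 - α) (nvec j + f j - 1)) *
              ∏ i, risefac (1 - α) (svec i - 1))) /
            (V n k * ∏ j, risefac (1 - α) (nvec j - 1)))
      = (V (n + m) (k + kstar) / V n k * (m.choose (m - s) : ℝ) *
          ∏ i, risefac (1 - α) (svec i - 1)) *
        ((((m - s).factorial : ℝ) / ∏ j, ((f j).factorial : ℝ)) *
          ∏ j, risefac ((nvec j : ℝ) - α) (f j)) := by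
    intro f hf
    have hA : (∏ j, risefac (1 - α) (nvec j + f j - 1))
        = (∏ j, risefac (1 - α) (nvec j - 1)) * ∏ j, risefac ((nvec j : ℝ) - α) (f j) := by
      rw [← Finset.prod_mul_distrib]
      exact Finset.prod_congr rfl fun j _ => hsplit f j
    rw [hA]
    have hB := hBpos.ne'
    field_simp
  rw [Finset.sum_congr rfl key, ← Finset.mul_sum, risefac_multinomial]
  have hx : ∑ j, ((nvec j : ℝ) - α) = (n : ℝ) - k * α := by
    rw [Finset.sum_sub_distrib]
    push_cast [← hsum]
    simp [Finset.sum_const]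
  rw [hx]
  ring
end

section
/- Let α < 1 be real, let V : ℕ × ℕ → ℝ be weights, let (n_1,…,n_k) be positive integers with sum n and V(n,k) ≠ 0, let (m_1,…,m_k) be nonnegative integers with sum m − s where s ≥ 1, and suppose D := ∑_{k*'=1}^{s} V(n+m, k+k*') · S_{s,k*'}^{-1,-α} ≠ 0 and ∏_{j=1}^k (n_j − α)_{m_j↑} ≠ 0. Then for every k*-tuple (s_1,…,s_{k*}) of positive integers with s_1 + ⋯ + s_{k*} = s, the conditional EPPF of the partition obtained by deletion of the first k classes satisfies: [p(n_1+m_1,…,n_k+m_k, s_1,…,s_{k*})/p(n_1,…,n_k)] / [∑_{partitions {B_1,…,B_{k*'}} of {1,…,s}} p(n_1+m_1,…,n_k+m_k, |B_1|,…,|B_{k*'}|)/p(n_1,…,n_k)] = V(n+m, k+k*) · ∏_{i=1}^{k*} (1−α)_{s_i−1↑} / D, where p is the Gibbs EPPF of type α with weights V. -/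
open Finset in
lemma risefac_pos {x : ℝ} (hx : 0 < x) (n : ℕ) : 0 < risefac x n := by
  unfold risefac
  exact Finset.prod_pos fun i _ => by positivity


open Finset

def ordP {β : Type*} [Fintype β] [DecidableEq β] (S : Finset β) (k : ℕ) :
    Finset (Fin k → Finset β) :=
  Finset.univ.filter fun t =>
    (∀ i j, i ≠ j → Disjoint (t i) (t j)) ∧ Finset.univ.sup t = S

lemma sup_univ_succ' {β : Type*} [DecidableEq β] {k : ℕ} (t : Fin (k+1) → Finset β) :
    Finset.univ.sup t = t 0 ⊔ Finset.univ.sup (fun j : Fin k => t j.succ) := by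
  rw [Fin.univ_succ, Finset.sup_cons, Finset.sup_map]
  rfl

lemma card_ordP_sizes {β : Type*} [Fintype β] [DecidableEq β] (k : ℕ) (S : Finset β)
    (n : Fin k → ℕ) (hn : ∑ j, n j = S.card) :
    ((ordP S k).filter fun t => ∀ j, (t j).card = n j).card = Nat.multinomial Finset.univ n := by
  induction k generalizing S with
  | zero =>
    have hS : S = ∅ := Finset.card_eq_zero.1 (by simpa using hn.symm)
    have h1 : ((ordP S 0).filter fun t => ∀ j, (t j).card = n j) = Finset.univ := by
      ext t
      simp [ordP, hS]
    rw [h1]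
    simp [Nat.multinomial]
  | succ k ih =>
    have hmaps : ∀ t ∈ (ordP S (k+1)).filter fun t => ∀ j, (t j).card = n j,
        t 0 ∈ S.powersetCard (n 0) := by
      intro t ht
      simp only [Finset.mem_filter, ordP, Finset.mem_univ, true_and] at ht
      obtain ⟨⟨hd, hsup⟩, hcard⟩ := ht
      rw [Finset.mem_powersetCard]
      exact ⟨hsup ▸ Finset.le_sup (Finset.mem_univ 0), hcard 0⟩
    rw [Finset.card_eq_sum_card_fiberwise hmaps]
    have hfib : ∀ A ∈ S.powersetCard (n 0),
        ((((ordP S (k+1)).filter fun t => ∀ j, (t j).card = n j).filter fun t => t 0 = A).card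
          = Nat.multinomial Finset.univ (n ∘ Fin.succ)) := by
      intro A hA
      rw [Finset.mem_powersetCard] at hA
      obtain ⟨hAS, hAc⟩ := hA
      have key : (((ordP S (k+1)).filter fun t => ∀ j, (t j).card = n j).filter
            fun t => t 0 = A).card
          = ((ordP (S \ A) k).filter fun u => ∀ j, (u j).card = (n ∘ Fin.succ) j).card := by
        refine Finset.card_bij' (fun t _ => fun j => t j.succ) (fun u _ => Fin.cons A u)
          ?_ ?_ ?_ ?_
        · -- forward membership
          intro t ht
          simp only [Finset.mem_filter, ordP, Finset.mem_univ, true_and] at ht ⊢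
          obtain ⟨⟨⟨hd, hsup⟩, hsz⟩, h0⟩ := ht
          refine ⟨⟨fun i j hij => hd i.succ j.succ (by simpa using hij), ?_⟩,
            fun j => hsz j.succ⟩
          have hdisj : Disjoint (t 0) (Finset.univ.sup (fun j : Fin k => t j.succ)) := by
            rw [Finset.disjoint_sup_right]
            intro i _
            exact hd 0 i.succ (Fin.succ_ne_zero i).symm
          rw [sup_univ_succ' t, h0] at hsup
          rw [← hsup, Finset.sup_eq_union, Finset.union_sdiff_cancel_left (h0 ▸ hdisj)]
        · -- backward membership
          intro u hu
          simp only [Finset.mem_filter, ordP, Finset.mem_univ, true_and] at hu ⊢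
          obtain ⟨⟨hd, hsup⟩, hsz⟩ := hu
          have husub : ∀ j, u j ⊆ S \ A := fun j => hsup ▸ Finset.le_sup (Finset.mem_univ j)
          have hdA : ∀ j, Disjoint A (u j) :=
            fun j => (Finset.sdiff_disjoint.mono_left (husub j)).symm
          refine ⟨⟨⟨?_, ?_⟩, ?_⟩, rfl⟩
          · intro i j hij
            induction i using Fin.cases with
            | zero =>
              induction j using Fin.cases with
              | zero => exact absurd rfl hij
              | succ j' => simpa [Fin.cons_succ] using hdA j'
            | succ i' =>
              induction j using Fin.cases with
              | zero => simpa [Fin.cons_succ] using (hdA i').symm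
              | succ j' =>
                have : i' ≠ j' := fun h => hij (by rw [h])
                simpa [Fin.cons_succ] using hd i' j' this
          · rw [sup_univ_succ' (Fin.cons A u)]
            simp only [Fin.cons_zero, Fin.cons_succ, Finset.sup_eq_union]
            rw [hsup]
            exact Finset.union_sdiff_of_subset hAS
          · intro j
            induction j using Fin.cases with
            | zero => simpa using hAc
            | succ j' => simpa [Fin.cons_succ] using hsz j'
        · intro t ht
          simp only [Finset.mem_filter] at ht
          show Fin.cons A (fun j => t j.succ) = t
          rw [← ht.2]
          exact Fin.cons_self_tail t
        · intro u hu
          funext j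
          simp [Fin.cons_succ]
      rw [key]
      apply ih
      have hsc : n 0 ≤ S.card := hn ▸ (Finset.single_le_sum (f := n) (fun i _ => Nat.zero_le _)
        (Finset.mem_univ 0))
      rw [Finset.card_sdiff_of_subset hAS, hAc]
      have h3 := Fin.sum_univ_succ n
      have h4 : ∑ j : Fin k, (n ∘ Fin.succ) j = ∑ j : Fin k, n j.succ := rfl
      rw [h4]
      exact Nat.eq_sub_of_add_eq' (by rw [← hn, h3])
    rw [Finset.sum_congr rfl hfib, Finset.sum_const, Finset.card_powersetCard]
    rw [Fin.univ_succ, Nat.multinomial_cons, Finset.sum_map]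
    have h1 : Nat.multinomial (Finset.univ.map ⟨Fin.succ, Fin.succ_injective k⟩) n
        = Nat.multinomial Finset.univ (n ∘ Fin.succ) := by
      unfold Nat.multinomial
      rw [Finset.sum_map, Finset.prod_map]
      rfl
    have h2 : n 0 + ∑ i : Fin k, n ((⟨Fin.succ, Fin.succ_injective k⟩ : Fin k ↪ Fin (k+1)) i)
        = S.card := by
      rw [← hn, Fin.sum_univ_succ]
      rfl
    rw [h1, h2, smul_eq_mul, mul_comm]


lemma card_orderings {γ : Type*} [DecidableEq γ] [Fintype γ] (k' : ℕ) (P : Finset γ)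
    (hP : P.card = k') :
    (Finset.univ.filter fun t : Fin k' → γ => Finset.image t Finset.univ = P).card
      = k'.factorial := by
  have e : {t : Fin k' → γ // Finset.image t Finset.univ = P} ≃ (Fin k' ↪ P) := by
    refine
      { toFun := fun t => ⟨fun j => ⟨t.1 j, by
            have h := Finset.mem_image_of_mem t.1 (Finset.mem_univ j)
            rwa [t.2] at h⟩,
          ?_⟩
        invFun := fun e => ⟨fun j => (e j : γ), ?_⟩
        left_inv := fun t => Subtype.ext (funext fun j => rfl)
        right_inv := fun e => by ext j; rfl }
    · -- injectivity
      intro i j h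
      obtain ⟨t, ht⟩ := t
      have hinj : Set.InjOn t (Finset.univ : Finset (Fin k')) := by
        rw [← Finset.card_image_iff]
        rw [ht, hP, Finset.card_univ, Fintype.card_fin]
      exact hinj (Finset.mem_univ i) (Finset.mem_univ j) (congrArg Subtype.val h)
    · -- image = P
      have hinj : Function.Injective fun j => ((e j : γ)) :=
        fun i j h => e.injective (Subtype.ext h)
      have hsub : Finset.image (fun j => (e j : γ)) Finset.univ ⊆ P := by
        intro x hx
        rw [Finset.mem_image] at hx
        obtain ⟨j, -, rfl⟩ := hx
        exact (e j).2
      refine Finset.eq_of_subset_of_card_le hsub ?_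
      rw [Finset.card_image_of_injective _ hinj, Finset.card_univ, Fintype.card_fin, hP]
  have h1 : (Finset.univ.filter fun t : Fin k' → γ => Finset.image t Finset.univ = P).card
      = Fintype.card {t : Fin k' → γ // Finset.image t Finset.univ = P} :=
    (Fintype.card_subtype _).symm
  rw [h1, Fintype.card_congr e, Fintype.card_embedding_eq, Fintype.card_coe, hP,
    Fintype.card_fin, Nat.descFactorial_self]


section
variable {s k' : ℕ} (F : ℕ → ℝ)

/-- ordered positive partitions -/
def posOrdP (s k' : ℕ) : Finset (Fin k' → Finset (Fin s)) :=
  (ordP Finset.univ k').filter fun t => ∀ j, t j ≠ ∅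

lemma mem_posOrdP {t : Fin k' → Finset (Fin s)} :
    t ∈ posOrdP s k' ↔ ((∀ i j, i ≠ j → Disjoint (t i) (t j)) ∧
      Finset.univ.sup t = Finset.univ) ∧ ∀ j, t j ≠ ∅ := by
  simp [posOrdP, ordP]

lemma sum_card_of_mem_posOrdP {t : Fin k' → Finset (Fin s)} (ht : t ∈ posOrdP s k') :
    ∑ j, (t j).card = s := by
  rw [mem_posOrdP] at ht
  obtain ⟨⟨hd, hsup⟩, -⟩ := ht
  have h1 : (Finset.univ.biUnion t).card = ∑ j, (t j).card :=
    Finset.card_biUnion fun i _ j _ hij => hd i j hij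
  rw [← Finset.sup_eq_biUnion, hsup, Finset.card_univ, Fintype.card_fin] at h1
  exact h1.symm

/-- grouping ordered partitions by size vector -/
lemma sum_posOrdP_eq_sum_comps :
    ∑ t ∈ posOrdP s k', ∏ j, F ((t j).card)
      = ∑ f ∈ (Finset.Nat.antidiagonalTuple k' s).filter (fun f => ∀ i, 0 < f i),
          (Nat.multinomial Finset.univ f : ℝ) * ∏ j, F (f j) := by
  have hmaps : ∀ t ∈ posOrdP s k', (fun j => (t j).card)
      ∈ (Finset.Nat.antidiagonalTuple k' s).filter (fun f => ∀ i, 0 < f i) := by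
    intro t ht
    rw [Finset.mem_filter, Finset.Nat.mem_antidiagonalTuple]
    refine ⟨sum_card_of_mem_posOrdP ht, fun i => Finset.card_pos.2 ?_⟩
    rw [Finset.nonempty_iff_ne_empty]
    exact (mem_posOrdP.1 ht).2 i
  rw [← Finset.sum_fiberwise_of_maps_to hmaps]
  refine Finset.sum_congr rfl fun f hf => ?_
  rw [Finset.mem_filter, Finset.Nat.mem_antidiagonalTuple] at hf
  obtain ⟨hfs, hfpos⟩ := hf
  have hconst : ∀ t ∈ (posOrdP s k').filter (fun t => (fun j => (t j).card) = f),
      ∏ j, F ((t j).card) = ∏ j, F (f j) := by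
    intro t ht
    rw [Finset.mem_filter] at ht
    exact Finset.prod_congr rfl fun j _ => by rw [← congrFun ht.2 j]
  rw [Finset.sum_congr rfl hconst, Finset.sum_const, nsmul_eq_mul]
  congr 1
  have hset : (posOrdP s k').filter (fun t => (fun j => (t j).card) = f)
      = (ordP (Finset.univ : Finset (Fin s)) k').filter fun t => ∀ j, (t j).card = f j := by
    ext t
    simp only [posOrdP, Finset.filter_filter, Finset.mem_filter, funext_iff]
    constructor
    · rintro ⟨h1, h2, h3⟩
      exact ⟨h1, h3⟩
    · rintro ⟨h1, h3⟩
      refine ⟨h1, fun j => ?_, h3⟩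
      rw [← Finset.nonempty_iff_ne_empty, ← Finset.card_pos, h3 j]
      exact hfpos j
  rw [hset, card_ordP_sizes]
  rw [hfs, Finset.card_univ, Fintype.card_fin]

/-- grouping ordered partitions by their underlying set partition -/
lemma sum_posOrdP_eq_factorial_mul :
    ∑ t ∈ posOrdP s k', ∏ j, F ((t j).card)
      = (k'.factorial : ℝ) *
          ∑ P ∈ (allPartitions s).filter (fun P => P.card = k'), ∏ A ∈ P, F A.card := by
  have hmaps : ∀ t ∈ posOrdP s k', Finset.image t Finset.univ
      ∈ (allPartitions s).filter (fun P => P.card = k') := by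
    intro t ht
    rw [mem_posOrdP] at ht
    obtain ⟨⟨hd, hsup⟩, hne⟩ := ht
    have hinj : Function.Injective t := by
      intro i j hij
      by_contra hij'
      have h0 := disjoint_self.1 (hij ▸ hd i j hij')
      exact hne j (by simpa using h0)
    rw [Finset.mem_filter, allPartitions, Finset.mem_filter]
    refine ⟨⟨Finset.mem_univ _, ?_, ?_, ?_⟩, ?_⟩
    · intro h
      rw [Finset.mem_image] at h
      obtain ⟨j, -, hj⟩ := h
      exact hne j hj
    · intro A hA B hB hAB
      rw [Finset.mem_image] at hA hB
      obtain ⟨i, -, rfl⟩ := hA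
      obtain ⟨j, -, rfl⟩ := hB
      exact hd i j fun h => hAB (by rw [h])
    · rw [Finset.sup_image]
      exact hsup
    · rw [Finset.card_image_of_injective _ hinj, Finset.card_univ, Fintype.card_fin]
  rw [← Finset.sum_fiberwise_of_maps_to hmaps, Finset.mul_sum]
  refine Finset.sum_congr rfl fun P hP => ?_
  rw [Finset.mem_filter, allPartitions, Finset.mem_filter] at hP
  obtain ⟨⟨-, hPne, hPd, hPsup⟩, hPc⟩ := hP
  have hconst : ∀ t ∈ (posOrdP s k').filter (fun t => Finset.image t Finset.univ = P),
      ∏ j, F ((t j).card) = ∏ A ∈ P, F A.card := by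
    intro t ht
    rw [Finset.mem_filter] at ht
    have hinj : Set.InjOn t (Finset.univ : Finset (Fin k')) := by
      rw [← Finset.card_image_iff, ht.2, hPc, Finset.card_univ, Fintype.card_fin]
    rw [← ht.2, Finset.prod_image (fun i hi j hj hij => hinj hi hj hij)]
  rw [Finset.sum_congr rfl hconst, Finset.sum_const, nsmul_eq_mul]
  congr 1
  have hset : (posOrdP s k').filter (fun t => Finset.image t Finset.univ = P)
      = Finset.univ.filter fun t : Fin k' → Finset (Fin s) =>
          Finset.image t Finset.univ = P := by
    ext t
    simp only [Finset.mem_filter, mem_posOrdP, Finset.mem_univ, true_and]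
    constructor
    · rintro ⟨-, h⟩
      exact h
    · intro h
      have hinj : Set.InjOn t (Finset.univ : Finset (Fin k')) := by
        rw [← Finset.card_image_iff, h, hPc, Finset.card_univ, Fintype.card_fin]
      have hmem : ∀ j, t j ∈ P := fun j => h ▸ Finset.mem_image_of_mem _ (Finset.mem_univ j)
      refine ⟨⟨⟨fun i j hij => ?_, ?_⟩, fun j hj => hPne (hj ▸ hmem j)⟩, h⟩
      · refine hPd _ (hmem i) _ (hmem j) fun hteq => hij ?_
        exact hinj (Finset.mem_univ i) (Finset.mem_univ j) hteq
      · rw [← hPsup, ← h, Finset.sup_image]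
        rfl
  rw [hset, card_orderings k' P hPc]
end

lemma sum_parts_eq_genStirling (s k' : ℕ) (α : ℝ) :
    ∑ P ∈ (allPartitions s).filter (fun P => P.card = k'),
        ∏ A ∈ P, risefac (1 - α) (A.card - 1)
      = genStirling α s k' := by
  have h1 := sum_posOrdP_eq_factorial_mul (s := s) (k' := k')
    (fun c => risefac (1 - α) (c - 1))
  have h2 := sum_posOrdP_eq_sum_comps (s := s) (k' := k')
    (fun c => risefac (1 - α) (c - 1))
  beta_reduce at h1 h2
  have hfac : (k'.factorial : ℝ) ≠ 0 := Nat.cast_ne_zero.2 (Nat.factorial_ne_zero _)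
  rw [h2] at h1
  have h3 : ∑ f ∈ (Finset.Nat.antidiagonalTuple k' s).filter (fun f => ∀ i, 0 < f i),
        (Nat.multinomial Finset.univ f : ℝ) * ∏ j, risefac (1 - α) (f j - 1)
      = (s.factorial : ℝ) *
          ∑ f ∈ (Finset.Nat.antidiagonalTuple k' s).filter (fun f => ∀ i, 0 < f i),
            ∏ j, risefac (1 - α) (f j - 1) / (f j).factorial := by
    rw [Finset.mul_sum]
    refine Finset.sum_congr rfl fun f hf => ?_
    rw [Finset.mem_filter, Finset.Nat.mem_antidiagonalTuple] at hf
    have hspec := Nat.multinomial_spec Finset.univ f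
    rw [hf.1] at hspec
    have hprodne : (∏ j, ((f j).factorial : ℝ)) ≠ 0 :=
      Finset.prod_ne_zero_iff.2 fun j _ => Nat.cast_ne_zero.2 (Nat.factorial_ne_zero _)
    have hm : ((Nat.multinomial Finset.univ f : ℕ) : ℝ)
        = (s.factorial : ℝ) / ∏ j, ((f j).factorial : ℝ) := by
      rw [eq_div_iff hprodne, ← Nat.cast_prod, ← Nat.cast_mul, mul_comm, hspec]
    rw [hm, Finset.prod_div_distrib]
    field_simp
  rw [h3] at h1
  have h4 : (k'.factorial : ℝ) * genStirling α s k'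
      = (s.factorial : ℝ) *
          ∑ f ∈ (Finset.Nat.antidiagonalTuple k' s).filter (fun f => ∀ i, 0 < f i),
            ∏ j, risefac (1 - α) (f j - 1) / (f j).factorial := by
    unfold genStirling
    field_simp
  exact mul_left_cancel₀ hfac (by rw [← h1, h4])

lemma key_sum (s : ℕ) (hs : 1 ≤ s) (α : ℝ) (G : ℕ → ℝ) :
    ∑ P ∈ allPartitions s, G P.card * ∏ A ∈ P, risefac (1 - α) (A.card - 1)
      = ∑ k' ∈ Finset.Icc 1 s, G k' * genStirling α s k' := by
  have hmaps : ∀ P ∈ allPartitions s, P.card ∈ Finset.Icc 1 s := by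
    intro P hP
    rw [allPartitions, Finset.mem_filter] at hP
    obtain ⟨-, hem, hd, hsup⟩ := hP
    have hcb : (P.biUnion id).card = ∑ A ∈ P, A.card :=
      Finset.card_biUnion (fun x hx y hy hxy => hd x hx y hy hxy)
    rw [← Finset.sup_eq_biUnion, hsup, Finset.card_univ, Fintype.card_fin] at hcb
    rw [Finset.mem_Icc]
    constructor
    · rw [Nat.one_le_iff_ne_zero]
      intro h0
      rw [Finset.card_eq_zero] at h0
      rw [h0, Finset.sum_empty] at hcb
      omega
    · calc P.card = ∑ _A ∈ P, 1 := by rw [Finset.sum_const, smul_eq_mul, mul_one]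
        _ ≤ ∑ A ∈ P, A.card := Finset.sum_le_sum fun A hA => Finset.card_pos.2
            (Finset.nonempty_iff_ne_empty.2 fun h => hem (h ▸ hA))
        _ = s := hcb.symm
  rw [← Finset.sum_fiberwise_of_maps_to hmaps]
  refine Finset.sum_congr rfl fun k' hk' => ?_
  rw [← sum_parts_eq_genStirling s k' α, Finset.mul_sum]
  refine Finset.sum_congr rfl fun P hP => ?_
  rw [Finset.mem_filter] at hP
  rw [hP.2]

/-- The EPPF of the partition obtained by deletion of the first `k` classes: conditionally
on the allocation `(m_1,…,m_k)` at old tables,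
`[p(n_1+m_1,…,n_k+m_k,s_1,…,s_{k*})/p(n)] / [∑_P p(n_1+m_1,…,n_k+m_k,|B_1|,…,|B_{k*'}|)/p(n)]
  = V(n+m,k+k*) ∏_i (1−α)_{s_i−1↑} / D`,
where `p(n_1,…,n_k) = V(n,k) ∏_j (1−α)_{n_j−1↑}`, `P` runs over partitions of `{1,…,s}`,
and `D = ∑_{k*'=1}^s V(n+m,k+k*') S_{s,k*'}^{-1,-α}`. -/
theorem gibbs_deletion_of_classes (α : ℝ) (hα : α < 1) (V : ℕ → ℕ → ℝ)
    (k : ℕ) (nvec : Fin k → ℕ) (hpos : ∀ j, 0 < nvec j)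
    (n : ℕ) (hsum : ∑ j, nvec j = n) (hVn : V n k ≠ 0)
    (s m : ℕ) (hs : 1 ≤ s) (hsm : s ≤ m)
    (mvec : Fin k → ℕ) (hmsum : ∑ j, mvec j = m - s)
    (hD : (∑ kstar' ∈ Finset.Icc 1 s, V (n + m) (k + kstar') * genStirling α s kstar') ≠ 0)
    (hprod : (∏ j, risefac ((nvec j : ℝ) - α) (mvec j)) ≠ 0)
    (kstar : ℕ) (svec : Fin kstar → ℕ) (hsv : ∀ i, 0 < svec i) (hssum : ∑ i, svec i = s) :
    ((V (n + m) (k + kstar) * ((∏ j, risefac (1 - α) (nvec j + mvec j - 1)) *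
            ∏ i, risefac (1 - α) (svec i - 1))) /
          (V n k * ∏ j, risefac (1 - α) (nvec j - 1))) /
        (∑ P ∈ allPartitions s,
          (V (n + m) (k + P.card) * ((∏ j, risefac (1 - α) (nvec j + mvec j - 1)) *
              ∏ A ∈ P, risefac (1 - α) (A.card - 1))) /
            (V n k * ∏ j, risefac (1 - α) (nvec j - 1)))
      = V (n + m) (k + kstar) * (∏ i, risefac (1 - α) (svec i - 1)) /
          (∑ kstar' ∈ Finset.Icc 1 s, V (n + m) (k + kstar') * genStirling α s kstar') := by
  have h1α : (0:ℝ) < 1 - α := by linarith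
  have hCd : (0:ℝ) < ∏ j, risefac (1 - α) (nvec j - 1) :=
    Finset.prod_pos fun j _ => risefac_pos h1α _
  have hCn : (0:ℝ) < ∏ j, risefac (1 - α) (nvec j + mvec j - 1) :=
    Finset.prod_pos fun j _ => risefac_pos h1α _
  set c : ℝ := (∏ j, risefac (1 - α) (nvec j + mvec j - 1)) /
    (V n k * ∏ j, risefac (1 - α) (nvec j - 1)) with hc
  have hcne : c ≠ 0 := div_ne_zero hCn.ne' (mul_ne_zero hVn hCd.ne')
  have hfact : ∀ x b : ℝ,
      x * ((∏ j, risefac (1 - α) (nvec j + mvec j - 1)) * b) /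
        (V n k * ∏ j, risefac (1 - α) (nvec j - 1)) = x * b * c := by
    intro x b
    rw [hc]
    ring
  rw [hfact]
  have hden : (∑ P ∈ allPartitions s,
        (V (n + m) (k + P.card) * ((∏ j, risefac (1 - α) (nvec j + mvec j - 1)) *
            ∏ A ∈ P, risefac (1 - α) (A.card - 1))) /
          (V n k * ∏ j, risefac (1 - α) (nvec j - 1)))
      = (∑ P ∈ allPartitions s,
          V (n + m) (k + P.card) * ∏ A ∈ P, risefac (1 - α) (A.card - 1)) * c := by
    rw [Finset.sum_mul]
    exact Finset.sum_congr rfl fun P _ => hfact _ _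
  rw [hden, mul_div_mul_right _ _ hcne]
  have hk := key_sum s hs α (fun c' => V (n + m) (k + c'))
  beta_reduce at hk
  rw [hk]
end
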